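/- Let $1 \leq j_1 < j_2 < \cdots < j_d$ be integers and define $A(x) \in \mathbb{R}^{d \times d}$ by $A_{\alpha\beta}(x) = 0$ for $\alpha > \beta$ and $A_{\alpha\beta}(x) = \frac{j_\beta!}{(j_\beta - j_\alpha)!} x^{j_\beta - j_\alpha}$ for $\alpha \leq \beta$ (with the convention $j_\alpha! / 0! \cdot x^0$ on the diagonal). Then there is a constant $c_3 > 0$ depending only on $d, j_1, \ldots, j_d$ such that the smallest singular value satisfies $S_{\min}(A(x)) \geq c_3 \max\{1, |x|\}^{-(j_d - j_1)(d-1)}$ for all $x \in \mathbb{R}$. -/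

import Mathlib

open scoped BigOperators

open Finset in
lemma euclid_coord_le_norm {d : ℕ} (v : EuclideanSpace ℝ (Fin d)) (i : Fin d) :
    |v i| ≤ ‖v‖ := by
  rw [EuclideanSpace.norm_eq, ← Real.sqrt_sq_eq_abs]
  apply Real.sqrt_le_sqrt
  have := Finset.single_le_sum (f := fun k => ‖v k‖ ^ 2) (fun k _ => by positivity)
    (Finset.mem_univ i)
  simpa [Real.norm_eq_abs, sq_abs] using this

lemma euclid_norm_le {d : ℕ} (w : EuclideanSpace ℝ (Fin d)) (C : ℝ) (hC : 0 ≤ C)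
    (h : ∀ i, |w i| ≤ C) : ‖w‖ ≤ d * C := by
  rw [EuclideanSpace.norm_eq]
  have h1 : ∑ i, ‖w i‖ ^ 2 ≤ ((d : ℝ) * C) ^ 2 := by
    calc ∑ i, ‖w i‖ ^ 2 ≤ ∑ _i : Fin d, C ^ 2 := by
          refine Finset.sum_le_sum fun i _ => ?_
          rw [Real.norm_eq_abs]
          exact pow_le_pow_left₀ (abs_nonneg _) (h i) 2
      _ = (d : ℝ) * C ^ 2 := by simp [mul_comm]
      _ ≤ ((d : ℝ) * C) ^ 2 := by
          rw [mul_pow]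
          have : (d : ℝ) ≤ (d : ℝ) ^ 2 := by
            exact_mod_cast Nat.cast_le.mpr (Nat.le_self_pow two_ne_zero d)
          nlinarith [sq_nonneg C, Nat.cast_nonneg (α := ℝ) d]
  calc Real.sqrt (∑ i, ‖w i‖ ^ 2) ≤ Real.sqrt (((d:ℝ) * C) ^ 2) := Real.sqrt_le_sqrt h1
    _ = (d : ℝ) * C := Real.sqrt_sq (by positivity)

lemma toEuclideanLin_norm_le {d : ℕ} (M : Matrix (Fin d) (Fin d) ℝ) (B : ℝ) (hB : 0 ≤ B)
    (h : ∀ i j, |M i j| ≤ B) (v : EuclideanSpace ℝ (Fin d)) :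
    ‖Matrix.toEuclideanLin M v‖ ≤ (d : ℝ) ^ 2 * B * ‖v‖ := by
  have key : ∀ i, |(Matrix.toEuclideanLin M v) i| ≤ (d : ℝ) * (B * ‖v‖) := by
    intro i
    have happ : (Matrix.toEuclideanLin M v) i = ∑ k, M i k * v k := by
      rw [Matrix.toEuclideanLin_apply]
      rfl
    rw [happ]
    calc |∑ k, M i k * v k| ≤ ∑ k, |M i k * v k| := Finset.abs_sum_le_sum_abs _ _
      _ ≤ ∑ _k : Fin d, B * ‖v‖ := by
          refine Finset.sum_le_sum fun k _ => ?_
          rw [abs_mul]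
          exact mul_le_mul (h i k) (euclid_coord_le_norm v k) (abs_nonneg _) hB
      _ = (d : ℝ) * (B * ‖v‖) := by simp [mul_comm]
  have := euclid_norm_le (Matrix.toEuclideanLin M v) ((d:ℝ) * (B * ‖v‖))
    (by positivity) key
  calc ‖Matrix.toEuclideanLin M v‖ ≤ (d : ℝ) * ((d:ℝ) * (B * ‖v‖)) := this
    _ = (d : ℝ) ^ 2 * B * ‖v‖ := by ring

lemma adjugate_entry_bound {d : ℕ} (M : Matrix (Fin d) (Fin d) ℝ) (E : ℝ) (hE : 1 ≤ E)
    (h : ∀ i j, |M i j| ≤ E) (i k : Fin d) :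
    |Matrix.adjugate M i k| ≤ (Nat.factorial d : ℝ) * E ^ (d - 1) := by
  have hE0 : 0 ≤ E := le_trans zero_le_one hE
  rw [Matrix.adjugate_apply, Matrix.det_apply]
  set N := M.updateRow k (Pi.single i 1) with hN
  calc |∑ σ : Equiv.Perm (Fin d), Equiv.Perm.sign σ • ∏ l, N (σ l) l|
      ≤ ∑ σ : Equiv.Perm (Fin d), |Equiv.Perm.sign σ • ∏ l, N (σ l) l| :=
        Finset.abs_sum_le_sum_abs _ _
    _ ≤ ∑ _σ : Equiv.Perm (Fin d), E ^ (d - 1) := by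
        refine Finset.sum_le_sum fun σ _ => ?_
        have habs : |Equiv.Perm.sign σ • ∏ l, N (σ l) l| = |∏ l, N (σ l) l| := by
          rcases Int.units_eq_one_or (Equiv.Perm.sign σ) with hs | hs <;>
            rw [hs] <;> simp
        rw [habs, Finset.abs_prod]
        set i₀ := σ⁻¹ k with hi₀
        rw [← Finset.mul_prod_erase Finset.univ _ (Finset.mem_univ i₀)]
        have h1 : |N (σ i₀) i₀| ≤ 1 := by
          have : σ i₀ = k := σ.apply_symm_apply k
          rw [this, hN, Matrix.updateRow_self, Pi.single_apply]
          split <;> simp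
        have h2 : ∏ l ∈ Finset.univ.erase i₀, |N (σ l) l| ≤ E ^ (d - 1) := by
          calc ∏ l ∈ Finset.univ.erase i₀, |N (σ l) l|
              ≤ ∏ _l ∈ Finset.univ.erase i₀, E := by
                refine Finset.prod_le_prod (fun l _ => abs_nonneg _) fun l hl => ?_
                have hlne : l ≠ i₀ := Finset.ne_of_mem_erase hl
                have hσ : σ l ≠ k := by
                  intro hc
                  exact hlne (by rw [hi₀, ← hc]; exact (σ.symm_apply_apply l).symm)
                rw [hN, Matrix.updateRow_ne hσ]
                exact h _ _
            _ = E ^ (d - 1) := by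
                rw [Finset.prod_const, Finset.card_erase_of_mem (Finset.mem_univ _),
                  Finset.card_univ, Fintype.card_fin]
        calc |N (σ i₀) i₀| * ∏ l ∈ Finset.univ.erase i₀, |N (σ l) l|
            ≤ 1 * E ^ (d - 1) :=
              mul_le_mul h1 h2 (Finset.prod_nonneg fun l _ => abs_nonneg _) zero_le_one
          _ = E ^ (d - 1) := one_mul _
    _ = (Nat.factorial d : ℝ) * E ^ (d - 1) := by
        rw [Finset.sum_const, Finset.card_univ, Fintype.card_perm, Fintype.card_fin,
          nsmul_eq_mul]

theorem stmt_14 (d : ℕ) (hd : 0 < d) (j : Fin d → ℕ)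
    (hj1 : 1 ≤ j ⟨0, hd⟩) (hjmono : StrictMono j) :
    ∃ c3 : ℝ, 0 < c3 ∧
      ∀ x : ℝ, ∀ v : EuclideanSpace ℝ (Fin d),
        c3 / (max 1 |x|) ^ ((j ⟨d - 1, by omega⟩ - j ⟨0, hd⟩) * (d - 1)) * ‖v‖ ≤
          ‖Matrix.toEuclideanLin
              (Matrix.of fun α β : Fin d =>
                if β.val < α.val then (0 : ℝ)
                else ((Nat.factorial (j β) : ℝ) / (Nat.factorial (j β - j α) : ℝ)) *
                  x ^ (j β - j α)) v‖ := by
  classical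
  have hjmax : ∀ β : Fin d, j β ≤ j ⟨d - 1, by omega⟩ := fun β => by
    have hb := β.isLt
    rcases eq_or_lt_of_le (show β ≤ ⟨d - 1, by omega⟩ from by
        rw [Fin.le_def]; simp only [Fin.val_mk]; omega)
      with h | h
    · rw [h]
    · exact le_of_lt (hjmono h)
  have hjmin : ∀ α : Fin d, j ⟨0, hd⟩ ≤ j α := fun α => by
    rcases eq_or_lt_of_le (show (⟨0, hd⟩ : Fin d) ≤ α from Fin.mk_le_of_le_val (Nat.zero_le _))
      with h | h
    · rw [← h]
    · exact le_of_lt (hjmono h)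
  set jmax : ℕ := j ⟨d - 1, by omega⟩ with hjmaxdef
  set jmin : ℕ := j ⟨0, hd⟩ with hjmindef
  set e : ℕ := jmax - jmin with he
  set Dr : ℝ := ∏ i : Fin d, (Nat.factorial (j i) : ℝ) with hDr
  have hDrpos : 0 < Dr := Finset.prod_pos fun i _ => by positivity
  set K : ℝ := (d : ℝ) ^ 2 * Dr⁻¹ * (Nat.factorial d : ℝ) *
    (Nat.factorial jmax : ℝ) ^ (d - 1) with hK
  have hKpos : 0 < K := by
    have hd' : (0:ℝ) < (d:ℝ) := by exact_mod_cast hd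
    have h1 : (0:ℝ) < (Nat.factorial d : ℝ) := by positivity
    have h2 : (0:ℝ) < (Nat.factorial jmax : ℝ) := by positivity
    positivity
  refine ⟨K⁻¹, inv_pos.mpr hKpos, fun x v => ?_⟩
  set Mx : ℝ := max 1 |x| with hMxdef
  have hMx1 : (1:ℝ) ≤ Mx := le_max_left _ _
  have hMx0 : (0:ℝ) < Mx := lt_of_lt_of_le one_pos hMx1
  set A : Matrix (Fin d) (Fin d) ℝ := Matrix.of fun α β : Fin d =>
    if β.val < α.val then (0 : ℝ)
    else ((Nat.factorial (j β) : ℝ) / (Nat.factorial (j β - j α) : ℝ)) *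
      x ^ (j β - j α) with hA
  set E : ℝ := (Nat.factorial jmax : ℝ) * Mx ^ e with hE
  have hfac1 : (1:ℝ) ≤ (Nat.factorial jmax : ℝ) := by
    exact_mod_cast Nat.one_le_iff_ne_zero.mpr (Nat.factorial_ne_zero jmax)
  have hE1 : (1:ℝ) ≤ E := by
    have h2 : (1:ℝ) ≤ Mx ^ e := one_le_pow₀ hMx1
    calc (1:ℝ) = 1 * 1 := by ring
      _ ≤ (Nat.factorial jmax : ℝ) * Mx ^ e :=
        mul_le_mul hfac1 h2 zero_le_one (le_trans zero_le_one hfac1)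
  -- entry bound
  have hentry : ∀ α β : Fin d, |A α β| ≤ E := by
    intro α β
    rw [hA, Matrix.of_apply]
    split_ifs with hlt
    · rw [abs_zero]; linarith
    · rw [abs_mul]
      have h1 : |(Nat.factorial (j β) : ℝ) / (Nat.factorial (j β - j α) : ℝ)|
          ≤ (Nat.factorial jmax : ℝ) := by
        rw [abs_of_nonneg (by positivity)]
        calc (Nat.factorial (j β) : ℝ) / (Nat.factorial (j β - j α) : ℝ)
            ≤ (Nat.factorial (j β) : ℝ) := by
              apply div_le_self (by positivity)
              exact_mod_cast Nat.one_le_iff_ne_zero.mpr (Nat.factorial_ne_zero _)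
          _ ≤ (Nat.factorial jmax : ℝ) := by
              exact_mod_cast Nat.factorial_le (hjmax β)
      have h2 : |x ^ (j β - j α)| ≤ Mx ^ e := by
        rw [abs_pow]
        calc |x| ^ (j β - j α) ≤ Mx ^ (j β - j α) :=
              pow_le_pow_left₀ (abs_nonneg x) (le_max_right 1 |x|) _
          _ ≤ Mx ^ e := by
              apply pow_le_pow_right₀ hMx1
              have := hjmax β
              have := hjmin α
              omega
      rw [hE]
      exact mul_le_mul h1 h2 (abs_nonneg _) (le_trans zero_le_one hfac1)
  -- determinant
  have hBT : A.BlockTriangular id := by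
    intro α β hab
    rw [hA, Matrix.of_apply, if_pos]
    exact hab
  have hdet : A.det = Dr := by
    rw [Matrix.det_of_upperTriangular hBT, hDr]
    refine Finset.prod_congr rfl fun i _ => ?_
    simp [hA]
  have hdetne : A.det ≠ 0 := by rw [hdet]; exact ne_of_gt hDrpos
  have hinv : A⁻¹ * A = 1 := Matrix.nonsing_inv_mul A (isUnit_iff_ne_zero.mpr hdetne)
  -- inverse entry bound
  set Bv : ℝ := Dr⁻¹ * (Nat.factorial d : ℝ) * (Nat.factorial jmax : ℝ) ^ (d - 1) *
    Mx ^ (e * (d - 1)) with hBv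
  have hBvnn : 0 ≤ Bv := by
    have h1 : (0:ℝ) < (Nat.factorial d : ℝ) := by positivity
    positivity
  have hinvEntry : ∀ i k, |A⁻¹ i k| ≤ Bv := by
    intro i k
    rw [Matrix.inv_def, Matrix.smul_apply, smul_eq_mul, abs_mul, Ring.inverse_eq_inv', hdet,
      abs_of_nonneg (inv_nonneg.mpr (le_of_lt hDrpos))]
    have hadj := adjugate_entry_bound A E hE1 hentry i k
    calc Dr⁻¹ * |A.adjugate i k| ≤ Dr⁻¹ * ((Nat.factorial d : ℝ) * E ^ (d - 1)) :=
          mul_le_mul_of_nonneg_left hadj (inv_nonneg.mpr (le_of_lt hDrpos))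
      _ = Bv := by
          rw [hE, mul_pow, ← pow_mul, hBv]; ring
  -- composing with the inverse
  have hcomp : Matrix.toEuclideanLin A⁻¹ (Matrix.toEuclideanLin A v) = v := by
    rw [Matrix.toEuclideanLin_apply, Matrix.toEuclideanLin_apply]
    simp [Matrix.mulVec_mulVec, hinv]
  have hnormv : ‖v‖ ≤ (d : ℝ) ^ 2 * Bv * ‖Matrix.toEuclideanLin A v‖ := by
    conv_lhs => rw [← hcomp]
    exact toEuclideanLin_norm_le A⁻¹ Bv hBvnn (fun i k => hinvEntry i k) _
  -- conclusion
  show K⁻¹ / Mx ^ (e * (d - 1)) * ‖v‖ ≤ ‖Matrix.toEuclideanLin A v‖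
  have hkey : (d : ℝ) ^ 2 * Bv = K * Mx ^ (e * (d - 1)) := by
    rw [hBv, hK]; ring
  have hMp : (0:ℝ) < Mx ^ (e * (d - 1)) := pow_pos hMx0 _
  calc K⁻¹ / Mx ^ (e * (d - 1)) * ‖v‖
      ≤ K⁻¹ / Mx ^ (e * (d - 1)) * (K * Mx ^ (e * (d - 1)) * ‖Matrix.toEuclideanLin A v‖) := by
        apply mul_le_mul_of_nonneg_left _ (by positivity)
        rw [← hkey]; exact hnormv
    _ = ‖Matrix.toEuclideanLin A v‖ := by
        field_simp
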